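/- On a weak K-contact manifold M^{2n+1}(f, Q, ξ, η, g), the Ricci curvature satisfies Ric(ξ, ξ) = tr Q = 2n + tr Q̃, and hence Ric(ξ,ξ) > 0. -/

import Mathlib

open scoped RealInnerProductSpace

lemma trace_eq_sum_inner_onb {V : Type*} [NormedAddCommGroup V] [InnerProductSpace ℝ V]
    [FiniteDimensional ℝ V] {ι : Type*} [Fintype ι] [DecidableEq ι]
    (b : OrthonormalBasis ι ℝ V) (T : V →ₗ[ℝ] V) :
    LinearMap.trace ℝ V T = ∑ i, ⟪T (b i), b i⟫ := by
  rw [LinearMap.trace_eq_matrix_trace ℝ b.toBasis T, Matrix.trace]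
  congr 1
  ext i
  rw [Matrix.diag_apply, LinearMap.toMatrix_apply, OrthonormalBasis.coe_toBasis,
    OrthonormalBasis.coe_toBasis_repr_apply, OrthonormalBasis.repr_apply_apply,
    real_inner_comm]

/-- pointwise version: on a weak K-contact manifold
`M^{2n+1}(f,Q,ξ,η,g)` (where `R_{ξ,X}ξ = f²X`), the Ricci curvature
`Ric(ξ,ξ) = Σᵢ g(R_{eᵢ,ξ}ξ, eᵢ)` equals `2n + tr Q̃` with `Q̃ = Q - id`
(the trace of `Q` on the contact distribution), and `Ric(ξ,ξ) > 0`. -/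
theorem weak_K_contact_Ric_xi_xi
    {V : Type*} [NormedAddCommGroup V] [InnerProductSpace ℝ V]
    [FiniteDimensional ℝ V]
    (n : ℕ) (hn : 0 < n) (hdim : Module.finrank ℝ V = 2 * n + 1)
    (f Q : V →ₗ[ℝ] V) (ξ : V) (hunit : ⟪ξ, ξ⟫ = 1)
    (hf2 : ∀ X, f (f X) = -(Q X) + ⟪X, ξ⟫ • ξ)
    (hQξ : Q ξ = ξ) (hfξ : f ξ = 0)
    (hskew : ∀ X Y, ⟪f X, Y⟫ = -⟪X, f Y⟫)
    (hker : ∀ X, f X = 0 → ∃ c : ℝ, X = c • ξ)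
    (R : V → V → V → V)
    (hR : ∀ X, R ξ X ξ = f (f X))
    (hRalt : ∀ X Y Z, R X Y Z = -(R Y X Z)) :
    (∑ i, ⟪R (stdOrthonormalBasis ℝ V i) ξ ξ, stdOrthonormalBasis ℝ V i⟫) =
      2 * n + LinearMap.trace ℝ V (Q - LinearMap.id) ∧
    0 < ∑ i, ⟪R (stdOrthonormalBasis ℝ V i) ξ ξ, stdOrthonormalBasis ℝ V i⟫ := by
  set b := stdOrthonormalBasis ℝ V
  -- each term equals ‖f (b i)‖²  (nonneg form) and also ⟪Q bᵢ, bᵢ⟫ - ⟪bᵢ,ξ⟫²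
  have hterm : ∀ i, ⟪R (b i) ξ ξ, b i⟫ = ⟪f (b i), f (b i)⟫ := by
    intro i
    rw [hRalt, hR, inner_neg_left]
    have := hskew (f (b i)) (b i)
    have h2 : ⟪f (f (b i)), b i⟫ = -⟪f (b i), f (b i)⟫ := by
      rw [hskew, real_inner_comm]
    linarith [h2]
  have hsum : (∑ i, ⟪R (b i) ξ ξ, b i⟫) = ∑ i, ⟪f (b i), f (b i)⟫ := by
    exact Finset.sum_congr rfl fun i _ => hterm i
  -- also each term = ⟪Q bᵢ, bᵢ⟫ - ⟪bᵢ,ξ⟫ * ⟪ξ, bᵢ⟫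
  have hterm2 : ∀ i, ⟪f (b i), f (b i)⟫ = ⟪Q (b i), b i⟫ - ⟪b i, ξ⟫ * ⟪ξ, b i⟫ := by
    intro i
    have h2 : ⟪f (f (b i)), b i⟫ = -⟪f (b i), f (b i)⟫ := by
      rw [hskew, real_inner_comm]
    rw [hf2] at h2
    rw [inner_add_left, inner_neg_left, inner_smul_left] at h2
    simp only [RCLike.star_def, conj_trivial] at h2
    have : ⟪ξ, b i⟫ = ⟪b i, ξ⟫ := real_inner_comm _ _
    nlinarith [h2]
  have hsumxi : (∑ i, ⟪b i, ξ⟫ * ⟪ξ, b i⟫) = 1 := by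
    have := b.sum_inner_mul_inner ξ ξ
    rw [← this] at hunit
    rw [← hunit]
    exact Finset.sum_congr rfl fun i _ => by rw [real_inner_comm ξ (b i)]
  have htr : LinearMap.trace ℝ V Q = ∑ i, ⟪Q (b i), b i⟫ := trace_eq_sum_inner_onb b Q
  have heq : (∑ i, ⟪R (b i) ξ ξ, b i⟫) = LinearMap.trace ℝ V Q - 1 := by
    rw [hsum]
    calc (∑ i, ⟪f (b i), f (b i)⟫)
        = ∑ i, (⟪Q (b i), b i⟫ - ⟪b i, ξ⟫ * ⟪ξ, b i⟫) :=
          Finset.sum_congr rfl fun i _ => hterm2 i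
      _ = (∑ i, ⟪Q (b i), b i⟫) - ∑ i, ⟪b i, ξ⟫ * ⟪ξ, b i⟫ := Finset.sum_sub_distrib _ _
      _ = LinearMap.trace ℝ V Q - 1 := by rw [hsumxi, htr]
  have htrid : LinearMap.trace ℝ V (LinearMap.id : V →ₗ[ℝ] V) = (2 * n + 1 : ℝ) := by
    rw [LinearMap.trace_id, hdim]; push_cast; ring
  constructor
  · rw [heq, map_sub, htrid]; ring
  · rw [hsum]
    have hpos : ∃ i, f (b i) ≠ 0 := by
      by_contra h
      push_neg at h
      have hf0 : f = 0 := by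
        apply b.toBasis.ext
        intro i
        simpa using h i
      have hspan : ∀ X : V, ∃ c : ℝ, X = c • ξ := fun X => hker X (by rw [hf0]; rfl)
      have : Module.finrank ℝ V ≤ 1 := by
        have : Submodule.span ℝ {ξ} = ⊤ := by
          rw [Submodule.eq_top_iff']
          intro X
          obtain ⟨c, hc⟩ := hspan X
          rw [hc]
          exact Submodule.smul_mem _ _ (Submodule.mem_span_singleton_self ξ)
        calc Module.finrank ℝ V = Module.finrank ℝ (Submodule.span ℝ ({ξ} : Set V)) := by
              rw [this, finrank_top]
          _ ≤ 1 := by simpa using finrank_span_le_card ({ξ} : Set V)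
      omega
    obtain ⟨i, hi⟩ := hpos
    apply Finset.sum_pos' (fun j _ => real_inner_self_nonneg) ⟨i, Finset.mem_univ i, ?_⟩
    rw [real_inner_self_eq_norm_sq]
    have : 0 < ‖f (b i)‖ := norm_pos_iff.mpr hi
    positivity
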